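/- For integers g ≥ 0 and n ≥ 2 with g ≥ (n-1)(n-2)/2, there exists a connected graph G with first Betti number β(G) = g and chromatic number χ(G) = n. -/

import Mathlib

namespace BettiAux
open SimpleGraph

variable (m k : ℕ)

abbrev Vt := Fin (m + 2) ⊕ (Fin k × Bool)

def extra (j : Fin k) : Finset (Sym2 (Vt m k)) :=
  {s(Sum.inl 0, Sum.inr (j, false)), s(Sum.inl 1, Sum.inr (j, true)),
   s(Sum.inr (j, false), Sum.inr (j, true))}

def E : Finset (Sym2 (Vt m k)) :=
  ((⊤ : SimpleGraph (Fin (m + 2))).edgeFinset.map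
    (Function.Embedding.sym2Map ⟨Sum.inl, Sum.inl_injective⟩))
  ∪ Finset.univ.biUnion (extra m k)

def G : SimpleGraph (Vt m k) := fromEdgeSet ↑(E m k)

lemma mem_E {e : Sym2 (Vt m k)} : e ∈ E m k ↔
    (∃ i j : Fin (m + 2), i ≠ j ∧ e = s(Sum.inl i, Sum.inl j)) ∨
    ∃ j : Fin k, e = s(Sum.inl 0, Sum.inr (j, false)) ∨
      e = s(Sum.inl 1, Sum.inr (j, true)) ∨
      e = s(Sum.inr (j, false), Sum.inr (j, true)) := by
  simp only [E, extra, Finset.mem_union, Finset.mem_map, Finset.mem_biUnion, Finset.mem_univ,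
    true_and, Finset.mem_insert, Finset.mem_singleton, mem_edgeFinset]
  constructor
  · rintro (⟨e', he', rfl⟩ | ⟨j, h⟩)
    · induction e' using Sym2.ind with
      | _ i j =>
        left
        refine ⟨i, j, ?_, rfl⟩
        simpa using he'
    · right; exact ⟨j, by tauto⟩
  · rintro (⟨i, j, hij, rfl⟩ | ⟨j, h⟩)
    · left
      exact ⟨s(i, j), by simpa using hij, rfl⟩
    · right; exact ⟨j, by tauto⟩

lemma card_extra (j : Fin k) : (extra m k j).card = 3 := by
  rw [extra, Finset.card_insert_of_notMem, Finset.card_insert_of_notMem,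
    Finset.card_singleton]
  · simp [Sym2.eq_iff]
  · simp [Sym2.eq_iff]

lemma card_E : (E m k).card = (m + 2).choose 2 + 3 * k := by
  rw [E, Finset.card_union_of_disjoint, Finset.card_map, Finset.card_biUnion]
  · rw [← Fintype.card_fin (m + 2), card_edgeFinset_top_eq_card_choose_two]
    simp [card_extra, mul_comm]
  · intro a _ b _ hab
    rw [Function.onFun, Finset.disjoint_left]
    intro e hea heb
    simp only [extra, Finset.mem_insert, Finset.mem_singleton] at hea heb
    rcases hea with h | h | h <;> rcases heb with h' | h' | h' <;>
      subst h <;> simp_all [Sym2.eq_iff]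
  · rw [Finset.disjoint_left]
    intro e hea heb
    obtain ⟨e', _, rfl⟩ := Finset.mem_map.mp hea
    simp only [Finset.mem_biUnion, Finset.mem_univ, true_and, extra, Finset.mem_insert,
      Finset.mem_singleton] at heb
    induction e' using Sym2.ind with
    | _ i j =>
      rcases heb with ⟨j', h | h | h⟩ <;>
        simp [Function.Embedding.sym2Map, Sym2.eq_iff] at h

lemma not_isDiag {e : Sym2 (Vt m k)} (he : e ∈ E m k) : ¬ e.IsDiag := by
  rcases (mem_E m k).mp he with ⟨i, j, hij, rfl⟩ | ⟨j, h | h | h⟩ <;>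
    subst_vars <;> simp_all [Sym2.mk_isDiag_iff]

lemma edgeSet_G : (G m k).edgeSet = ↑(E m k) := by
  rw [G, edgeSet_fromEdgeSet]
  ext e
  simp only [Set.mem_diff, Finset.mem_coe, Set.mem_setOf_eq, and_iff_left_iff_imp]
  exact fun he => not_isDiag m k he

lemma adj_iff {a b : Vt m k} : (G m k).Adj a b ↔ s(a, b) ∈ E m k ∧ a ≠ b := by
  rw [G, fromEdgeSet_adj, Finset.mem_coe]

lemma adj_inl {i j : Fin (m + 2)} (h : i ≠ j) : (G m k).Adj (Sum.inl i) (Sum.inl j) := by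
  rw [adj_iff]
  exact ⟨(mem_E m k).mpr (Or.inl ⟨i, j, h, rfl⟩), fun hc => h (Sum.inl_injective hc)⟩

lemma adj_false (j : Fin k) : (G m k).Adj (Sum.inl 0) (Sum.inr (j, false)) := by
  rw [adj_iff]
  exact ⟨(mem_E m k).mpr (Or.inr ⟨j, Or.inl rfl⟩), by simp⟩

lemma adj_true (j : Fin k) : (G m k).Adj (Sum.inl 1) (Sum.inr (j, true)) := by
  rw [adj_iff]
  exact ⟨(mem_E m k).mpr (Or.inr ⟨j, Or.inr (Or.inl rfl)⟩), by simp⟩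

lemma connected_G : (G m k).Connected := by
  rw [connected_iff]
  refine ⟨fun a b => ?_, ⟨Sum.inl 0⟩⟩
  have key : ∀ v : Vt m k, (G m k).Reachable v (Sum.inl 0) := by
    rintro (i | ⟨j, b⟩)
    · rcases eq_or_ne i 0 with rfl | h
      · rfl
      · exact (adj_inl m k h).reachable
    · cases b
      · exact (adj_false m k j).symm.reachable
      · exact ((adj_true m k j).reachable.symm).trans
          ((adj_inl m k (by simp [Fin.ext_iff])).reachable)
  exact (key a).trans (key b).symm

def coloring : (G m k).Coloring (Fin (m + 2)) :=
  Coloring.mk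
    (fun v => match v with
      | Sum.inl i => i
      | Sum.inr (_, b) => if b then 0 else 1)
    (by
      intro a b hab
      rw [adj_iff] at hab
      obtain ⟨he, hne⟩ := hab
      rcases (mem_E m k).mp he with ⟨i, j, hij, hs⟩ | ⟨j, hs | hs | hs⟩ <;>
        rw [Sym2.eq_iff] at hs <;>
        rcases hs with ⟨rfl, rfl⟩ | ⟨rfl, rfl⟩ <;>
        simp_all [Fin.ext_iff])

def topEmbedding : (⊤ : SimpleGraph (Fin (m + 2))) ↪g (G m k) where
  toFun := Sum.inl
  inj' := Sum.inl_injective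
  map_rel_iff' := by
    intro i j
    simp only [top_adj]
    constructor
    · exact fun h => fun hc => h.ne (congrArg Sum.inl hc)
    · exact fun h => adj_inl m k h

lemma chromatic_G : (G m k).chromaticNumber = (m + 2 : ℕ) := by
  refine le_antisymm ?_ ?_
  · exact Colorable.chromaticNumber_le ⟨coloring m k⟩
  · have := chromaticNumber_mono_of_hom (topEmbedding m k).toHom
    rwa [chromaticNumber_top, Fintype.card_fin] at this

end BettiAux

/-- For `g ≥ 0` and `n ≥ 2` with `g ≥ (n-1)(n-2)/2`, there exists a connected graph with
first Betti number `g` and chromatic number `n`. -/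
theorem exists_graph_betti_chromatic (g n : ℕ) (hn : 2 ≤ n)
    (hg : ((n : ℤ) - 1) * ((n : ℤ) - 2) / 2 ≤ g) :
    ∃ (V : Type) (_ : Fintype V) (G : SimpleGraph V) (_ : Fintype G.edgeSet),
      G.Connected ∧ (G.edgeFinset.card : ℤ) - Fintype.card V + 1 = g ∧
      G.chromaticNumber = n := by
  obtain ⟨m, rfl⟩ : ∃ m, n = m + 2 := ⟨n - 2, by omega⟩
  have hc : (m + 1).choose 2 ≤ g := by
    have hdvd : 2 ∣ (m + 1) * m := by
      rw [mul_comm]; exact (Nat.even_mul_succ_self m).two_dvd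
    have he : (m + 1) * m = 2 * ((m + 1).choose 2) := by
      rw [Nat.choose_two_right]
      simp only [Nat.add_sub_cancel]
      omega
    have h2 : ((m : ℤ) + 2 - 1) * ((m : ℤ) + 2 - 2) = 2 * (((m + 1).choose 2 : ℕ) : ℤ) := by
      have h3 : ((m : ℤ) + 2 - 1) * ((m : ℤ) + 2 - 2) = (((m + 1) * m : ℕ) : ℤ) := by
        push_cast; ring
      rw [h3, he]; push_cast; ring
    push_cast at hg
    rw [h2, Int.mul_ediv_cancel_left _ (by norm_num : (2 : ℤ) ≠ 0)] at hg
    exact_mod_cast hg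
  obtain ⟨k, hk⟩ : ∃ k, g = (m + 1).choose 2 + k := ⟨g - (m + 1).choose 2, by omega⟩
  letI inst : Fintype (BettiAux.G m k).edgeSet :=
    Fintype.ofFinset (BettiAux.E m k) (fun x => by rw [BettiAux.edgeSet_G]; simp)
  refine ⟨BettiAux.Vt m k, inferInstance, BettiAux.G m k, inst, ?_, ?_, ?_⟩
  · exact BettiAux.connected_G m k
  · have hEF : (BettiAux.G m k).edgeFinset = BettiAux.E m k := by
      ext e
      rw [SimpleGraph.mem_edgeFinset, BettiAux.edgeSet_G, Finset.mem_coe]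
    rw [hEF, BettiAux.card_E]
    have hcard : Fintype.card (BettiAux.Vt m k) = (m + 2) + 2 * k := by
      simp [BettiAux.Vt, Fintype.card_sum, Fintype.card_prod, mul_comm]
    rw [hcard]
    have hch : (m + 2).choose 2 = (m + 1).choose 2 + (m + 1) := by
      rw [Nat.choose_two_right, Nat.choose_two_right]
      simp only [show m + 2 - 1 = m + 1 from rfl, show m + 1 - 1 = m from rfl]
      have hab : (m + 2) * (m + 1) = (m + 1) * m + 2 * (m + 1) := by ring
      omega
    rw [hch, hk]
    push_cast
    try ring
  · rw [BettiAux.chromatic_G]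
    try norm_cast
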